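/- Every pseudocompact topological group is precompact (totally bounded). -/

import Mathlib

open scoped Pointwise Topology Uniformity
open Filter Set
open scoped SetRel

/-- From a countable filtration of reflexive symmetric composable relations, produce a
pseudo-distance compatible with it. -/
lemma exists_pseudodist {X : Type} (E : ℕ → Set (X × X))
    (hrefl : ∀ n x, (x, x) ∈ E n)
    (hsymm : ∀ n, ∀ p ∈ E n, (p.2, p.1) ∈ E n)
    (hcomp : ∀ n, E (n + 1) ○ E (n + 1) ⊆ E n) :
    ∃ d : X → X → ℝ, (∀ x y, 0 ≤ d x y) ∧ (∀ x, d x x = 0) ∧ (∀ x y, d x y = d y x) ∧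
      (∀ x y z, d x z ≤ d x y + d y z) ∧
      (∀ n, ∃ ε > 0, ∀ x y, d x y < ε → (x, y) ∈ E n) ∧
      (∀ ε > 0, ∃ n, ∀ x y, (x, y) ∈ E n → d x y < ε) := by
  classical
  have hanti : ∀ n, E (n + 1) ⊆ E n := by
    intro n p hp
    exact hcomp n ⟨p.1, hrefl _ _, hp⟩
  have hdir : Directed (· ≥ ·) fun n => (𝓟 (E n) : Filter (X × X)) := by
    have : Antitone fun n => (𝓟 (E n) : Filter (X × X)) :=
      antitone_nat_of_succ_le fun n => principal_mono.2 (hanti n)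
    exact this.directed_ge
  letI U : UniformSpace X := UniformSpace.ofCore
    { uniformity := ⨅ n, 𝓟 (E n)
      refl := le_iInf fun n => principal_mono.2 fun p hp => by
        simp only [SetRel.id, mem_setOf_eq] at hp
        cases p
        simp_all [hrefl n]
      symm := by
        rw [tendsto_iInf]
        intro n
        rw [tendsto_principal]
        refine eventually_iff_exists_mem.2 ⟨E n, mem_iInf_of_mem n (mem_principal_self _), ?_⟩
        intro p hp
        exact hsymm n p hp
      comp := by
        refine le_iInf fun n => le_principal_iff.2 ?_
        refine mem_of_superset (mem_lift' (mem_iInf_of_mem (n + 1) (mem_principal_self _)))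
          (hcomp n) }
  have hU : (𝓤 X) = ⨅ n, 𝓟 (E n) := rfl
  haveI : (𝓤 X).IsCountablyGenerated := by
    rw [hU]; exact isCountablyGenerated_seq E
  obtain ⟨I, hI⟩ := UniformSpace.metrizable_uniformity X
  refine ⟨fun x y => @dist X I.toDist x y, ?_, ?_, ?_, ?_, ?_, ?_⟩
  · intro x y; exact @dist_nonneg X I x y
  · intro x; exact @dist_self X I x
  · intro x y; exact @dist_comm X I x y
  · intro x y z; exact @dist_triangle X I x y z
  · intro n
    have hmem : E n ∈ @uniformity X I.toUniformSpace := by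
      rw [hI, hU]; exact mem_iInf_of_mem n (mem_principal_self _)
    rcases (@Metric.mem_uniformity_dist X I _).1 hmem with ⟨ε, hε, h⟩
    exact ⟨ε, hε, fun x y hxy => h hxy⟩
  · intro ε hε
    have hmem : {p : X × X | @dist X I.toDist p.1 p.2 < ε} ∈ @uniformity X I.toUniformSpace :=
      @Metric.dist_mem_uniformity X I ε hε
    rw [hI, hU, mem_iInf_of_directed hdir] at hmem
    rcases hmem with ⟨n, hn⟩
    exact ⟨n, fun x y hxy => hn hxy⟩


lemma exists_bump {G : Type} [Group G] [TopologicalSpace G] [IsTopologicalGroup G] {W : Set G}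
    (hW : W ∈ 𝓝 (1 : G)) :
    ∃ S : Set G, S ∈ 𝓝 (1 : G) ∧ S⁻¹ = S ∧ S * S * S * S ⊆ W ∧
      ∃ φ : G → ℝ, Continuous φ ∧ φ 1 = 1 ∧ (∀ x, 0 ≤ φ x) ∧ (∀ x, φ x ≤ 1) ∧
        (∀ x, φ x ≠ 0 → x ∈ S) := by
  classical
  have step : ∀ S : Set G, S ∈ 𝓝 (1 : G) → ∃ T : Set G, T ∈ 𝓝 (1 : G) ∧ T⁻¹ = T ∧ T * T ⊆ S := by
    intro S hS
    obtain ⟨A, hA, hAmul⟩ := exists_nhds_one_split hS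
    refine ⟨A ∩ A⁻¹, inter_mem hA (inv_mem_nhds_one G hA), ?_, ?_⟩
    · ext z; simp only [Set.mem_inv, Set.mem_inter_iff, inv_inv]; tauto
    · rw [Set.mul_subset_iff]
      intro a ha b hb
      exact hAmul a ha.1 b hb.1
  choose! T hT1 hTsymm hTmul using step
  set R : ℕ → Set G := fun n => Nat.rec W (fun _ s => T s) n with hR
  have hR1 : ∀ n, R n ∈ 𝓝 (1 : G) := by
    intro n
    induction n with
    | zero => exact hW
    | succ n ih => exact hT1 _ ih
  have hRsucc : ∀ n, R (n + 1) = T (R n) := fun n => rfl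
  have hRsymm : ∀ n, (R (n + 1))⁻¹ = R (n + 1) := fun n => hTsymm _ (hR1 n)
  have hRmul : ∀ n, R (n + 1) * R (n + 1) ⊆ R n := fun n => hTmul _ (hR1 n)
  set S : Set G := R 2 with hSdef
  have hS4 : S * S * S * S ⊆ W := by
    calc S * S * S * S = S * S * (S * S) := by rw [mul_assoc, mul_assoc]
    _ ⊆ R 1 * R 1 := Set.mul_subset_mul (hRmul 1) (hRmul 1)
    _ ⊆ W := hRmul 0
  obtain ⟨d, hd0, hdself, hdcomm, hdtri, hd5, hd6⟩ := exists_pseudodist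
    (fun n => {p : G × G | p.1⁻¹ * p.2 ∈ R (n + 2)})
    (fun n x => by simp [mem_of_mem_nhds (hR1 (n + 2))])
    (fun n p hp => by
      simp only [mem_setOf_eq] at hp ⊢
      have : (p.1⁻¹ * p.2)⁻¹ ∈ (R (n + 2))⁻¹ := Set.inv_mem_inv.2 hp
      rwa [hRsymm (n + 1), mul_inv_rev, inv_inv] at this)
    (fun n p hp => by
      obtain ⟨y, hy1, hy2⟩ := hp
      simp only [mem_setOf_eq] at hy1 hy2 ⊢
      have := Set.mul_mem_mul hy1 hy2
      rw [show p.1⁻¹ * y * (y⁻¹ * p.2) = p.1⁻¹ * p.2 by group] at this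
      exact hRmul (n + 2) this)
  obtain ⟨ε₀, hε₀, hball⟩ := hd5 0
  have hgcont : Continuous fun z : G => d 1 z := by
    rw [continuous_iff_continuousAt]
    intro x₀
    rw [ContinuousAt, Metric.tendsto_nhds]
    intro ε hε
    obtain ⟨n, hn⟩ := hd6 ε hε
    have hnbhd : {z : G | x₀⁻¹ * z ∈ R (n + 2)} ∈ 𝓝 x₀ := by
      have hc : ContinuousAt (fun z : G => x₀⁻¹ * z) x₀ :=
        (continuous_const.mul continuous_id).continuousAt
      have := hc.preimage_mem_nhds (by simpa using hR1 (n + 2))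
      simpa [Set.preimage] using this
    filter_upwards [hnbhd] with z hz
    have hdz : d x₀ z < ε := hn x₀ z hz
    rw [Real.dist_eq, abs_sub_lt_iff]
    constructor
    · have := hdtri 1 x₀ z
      linarith
    · have := hdtri 1 z x₀
      have hcz : d z x₀ = d x₀ z := hdcomm z x₀
      linarith
  refine ⟨S, hR1 2, hRsymm 1, hS4, fun z => max (1 - d 1 z / ε₀) 0, ?_, ?_, ?_, ?_, ?_⟩
  · exact ((continuous_const.sub (hgcont.div_const ε₀)).max continuous_const)
  · simp [hdself 1]
  · intro z; exact le_max_right _ _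
  · intro z
    have : 0 ≤ d 1 z / ε₀ := div_nonneg (hd0 1 z) hε₀.le
    apply max_le <;> linarith
  · intro z hz
    have h1 : 1 - d 1 z / ε₀ > 0 := by
      by_contra h
      push_neg at h
      apply hz
      simp [max_eq_right h]
    have : d 1 z < ε₀ := (div_lt_one hε₀).mp (sub_pos.mp h1)
    have := hball 1 z this
    simpa using this

/-- Comfort–Ross: every pseudocompact topological group is precompact (totally bounded). -/
theorem stmt_13 (G : Type) [Group G] [TopologicalSpace G] [IsTopologicalGroup G]
    (hpc : ∀ f : G → ℝ, Continuous f → ∃ M : ℝ, ∀ x : G, |f x| ≤ M) :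
    ∀ V ∈ 𝓝 (1 : G), ∃ F : Finset G, (Set.univ : Set G) ⊆ (F : Set G) * V := by
  classical
  intro V hV
  by_contra hcon
  push_neg at hcon
  have hbad : ∀ F : Finset G, ∃ z : G, z ∉ (F : Set G) * V := by
    intro F
    obtain ⟨z, -, hz⟩ := Set.not_subset.1 (hcon F)
    exact ⟨z, hz⟩
  choose g hg using hbad
  obtain ⟨S, hS1, hSsymm, hS4, φ, hφc, hφ1, hφ0, hφle, hφsupp⟩ := exists_bump hV
  have h1S : (1 : G) ∈ S := mem_of_mem_nhds hS1
  have hS_sub4 : S ⊆ S * S * S * S := by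
    intro a ha
    have := Set.mul_mem_mul (Set.mul_mem_mul (Set.mul_mem_mul ha h1S) h1S) h1S
    simpa using this
  have hS4symm : (S * S * S * S)⁻¹ = S * S * S * S := by
    rw [mul_inv_rev, mul_inv_rev, mul_inv_rev, hSsymm]
    rw [mul_assoc, mul_assoc]
  -- the separated sequence
  set X : ℕ → Finset G := fun n => Nat.rec ∅ (fun _ s => insert (g s) s) n with hX
  set x : ℕ → G := fun n => g (X n) with hxdef
  have hxn : ∀ n, x n ∉ (X n : Set G) * V := fun n => hg (X n)
  have hmem : ∀ m n, m < n → x m ∈ X n := by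
    intro m n h
    induction n with
    | zero => omega
    | succ n ih =>
      have hXs : X (n + 1) = insert (x n) (X n) := rfl
      rcases Nat.lt_succ_iff_lt_or_eq.1 h with h' | h'
      · rw [hXs]; exact Finset.mem_insert_of_mem (ih h')
      · rw [hXs, h']; exact Finset.mem_insert_self _ _
  have hsep : ∀ m n, m < n → (x m)⁻¹ * x n ∉ V := by
    intro m n h hmemV
    apply hxn n
    exact ⟨x m, Finset.mem_coe.2 (hmem m n h), (x m)⁻¹ * x n, hmemV, by group⟩
  have hsep4 : ∀ m n, m ≠ n → (x m)⁻¹ * x n ∉ S * S * S * S := by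
    intro m n hmn hin
    rcases Nat.lt_or_ge m n with h | h
    · exact hsep m n h (hS4 hin)
    · have h' : n < m := lt_of_le_of_ne h (Ne.symm hmn)
      have : ((x m)⁻¹ * x n)⁻¹ ∈ (S * S * S * S)⁻¹ := Set.inv_mem_inv.2 hin
      rw [hS4symm, mul_inv_rev, inv_inv] at this
      exact hsep n m h' (hS4 this)
  -- the bumps
  set b : ℕ → G → ℝ := fun n y => (n : ℝ) * φ ((x n)⁻¹ * y) with hb
  have hbc : ∀ n, Continuous (b n) := fun n =>
    continuous_const.mul (hφc.comp (continuous_const.mul continuous_id))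
  have hbsupp : ∀ n y, b n y ≠ 0 → (x n)⁻¹ * y ∈ S := by
    intro n y h
    apply hφsupp
    intro h0
    apply h
    simp [hb, h0]
  have hinS : ∀ a b : G, a⁻¹ * b ∈ S → b⁻¹ * a ∈ S := by
    intro a c h
    have : (a⁻¹ * c)⁻¹ ∈ S⁻¹ := Set.inv_mem_inv.2 h
    rwa [hSsymm, mul_inv_rev, inv_inv] at this
  have hlf : LocallyFinite fun n => Function.support (b n) := by
    intro y
    refine ⟨{z : G | y⁻¹ * z ∈ S}, ?_, ?_⟩
    · have hc : ContinuousAt (fun z : G => y⁻¹ * z) y :=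
        (continuous_const.mul continuous_id).continuousAt
      have := hc.preimage_mem_nhds (by simpa using hS1)
      simpa [Set.preimage] using this
    · have hsub : {n : ℕ | (Function.support (b n) ∩ {z : G | y⁻¹ * z ∈ S}).Nonempty}.Subsingleton := by
        intro m hm n hn
        by_contra hmn
        obtain ⟨z₁, hz₁s, hz₁t⟩ := hm
        obtain ⟨z₂, hz₂s, hz₂t⟩ := hn
        have h1 : (x m)⁻¹ * z₁ ∈ S := hbsupp m z₁ hz₁s
        have h2 : (x n)⁻¹ * z₂ ∈ S := hbsupp n z₂ hz₂s
        have h3 : z₁⁻¹ * y ∈ S := hinS y z₁ hz₁t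
        have h4 : y⁻¹ * z₂ ∈ S := hz₂t
        have h5 : z₂⁻¹ * x n ∈ S := hinS (x n) z₂ h2
        have := Set.mul_mem_mul (Set.mul_mem_mul (Set.mul_mem_mul h1 h3) h4) h5
        rw [show (x m)⁻¹ * z₁ * (z₁⁻¹ * y) * (y⁻¹ * z₂) * (z₂⁻¹ * x n) = (x m)⁻¹ * x n by group]
          at this
        exact hsep4 m n hmn this
      exact hsub.finite
  -- the unbounded function
  obtain ⟨M, hM⟩ := hpc (fun y => ∑ᶠ n, b n y) (continuous_finsum hbc hlf)
  set n₀ : ℕ := ⌈M⌉₊ + 1 with hn₀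
  have hsingle : ∑ᶠ n, b n (x n₀) = b n₀ (x n₀) := by
    apply finsum_eq_single
    intro m hm
    by_contra h
    have : (x m)⁻¹ * x n₀ ∈ S := hbsupp m (x n₀) h
    exact hsep4 m n₀ hm (hS_sub4 this)
  have hval : b n₀ (x n₀) = (n₀ : ℝ) := by
    simp [hb, hφ1]
  have hMn := hM (x n₀)
  rw [hsingle, hval] at hMn
  have h1 : |(n₀ : ℝ)| = (n₀ : ℝ) := abs_of_nonneg (by positivity)
  rw [h1] at hMn
  have h2 : M ≤ (⌈M⌉₊ : ℝ) := Nat.le_ceil M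
  have h3 : (n₀ : ℝ) = (⌈M⌉₊ : ℝ) + 1 := by push_cast [hn₀]; ring
  linarith
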